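/- In a medium (S,T), if a vacuous message m is stepwise effective for a state S, then m is ineffective for S, that is, Sm = S. -/

import Mathlib

open scoped Classical symmDiff

universe u

namespace Media

variable {S : Type u}

/-- The state obtained by applying the message (string of tokens) `m` to the state `s`. -/
def apply (s : S) (m : List (S → S)) : S :=
  m.foldl (fun x τ => τ x) s

/-- The sequence of states `S₀ = s, S₁, …, Sₙ` produced by the message `m` from the state `s`. -/
def produced (s : S) (m : List (S → S)) : List S :=
  m.scanl (fun x τ => τ x) s

/-- `τ'` is a reverse of the token `τ`. -/
def IsReverse (τ τ' : S → S) : Prop :=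
  ∀ P Q : S, P ≠ Q → (τ P = Q ↔ τ' Q = P)

/-- The message `m` is stepwise effective for the state `s`. -/
def StepwiseEffective (s : S) (m : List (S → S)) : Prop :=
  List.Chain' (· ≠ ·) (produced s m)

/-- The message `m` is consistent: it does not contain both a token and its reverse. -/
def Consistent (m : List (S → S)) : Prop :=
  ∀ τ ∈ m, ∀ τ' ∈ m, ¬ IsReverse τ τ'

/-- The message `m` is concise for the state `s`. -/
def Concise (s : S) (m : List (S → S)) : Prop :=
  StepwiseEffective s m ∧ Consistent m ∧ m.Nodup

/-- The message `m` is vacuous: its indices can be partitioned into pairs of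
mutually reverse tokens. -/
def Vacuous (m : List (S → S)) : Prop :=
  ∃ f : Fin m.length → Fin m.length, Function.Involutive f ∧
    (∀ i, f i ≠ i) ∧ ∀ i, IsReverse (m.get i) (m.get (f i))

/-- The message `m` is closed for the state `s`. -/
def Closed (s : S) (m : List (S → S)) : Prop :=
  StepwiseEffective s m ∧ apply s m = s

/-- `(S, T)` is a medium: a token system satisfying axioms [M1] and [M2]. -/
def IsMedium (T : Set (S → S)) : Prop :=
  (∃ a b : S, a ≠ b) ∧ T.Nonempty ∧ (∀ τ ∈ T, τ ≠ id) ∧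
  (∀ P Q : S, P ≠ Q →
    ∃ m : List (S → S), (∀ τ ∈ m, τ ∈ T) ∧ Concise P m ∧ apply P m = Q) ∧
  (∀ (P : S) (m : List (S → S)), (∀ τ ∈ m, τ ∈ T) → Closed P m → Vacuous m)

theorem isReverse_symm {τ τ' : S → S} (h : IsReverse τ τ') : IsReverse τ' τ :=
  fun P Q hPQ => (h Q P hPQ.symm).symm

theorem isReverse_unique {τ a b : S → S} (h1 : IsReverse τ a) (h2 : IsReverse τ b) : a = b := by
  funext Q
  by_cases hq : ∃ P, P ≠ Q ∧ τ P = Q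
  · obtain ⟨P, hP, hτ⟩ := hq
    rw [(h1 P Q hP).1 hτ, (h2 P Q hP).1 hτ]
  · have ha : a Q = Q := by
      by_contra hne
      exact hq ⟨a Q, hne, (h1 (a Q) Q hne).2 rfl⟩
    have hb : b Q = Q := by
      by_contra hne
      exact hq ⟨b Q, hne, (h2 (b Q) Q hne).2 rfl⟩
    rw [ha, hb]

theorem count_eq_card {α : Type*} [DecidableEq α] (w : List α) (τ : α) :
    w.count τ = (Finset.univ.filter fun i : Fin w.length => w.get i = τ).card := by
  induction w with
  | nil => simp
  | cons a t ih =>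
    rw [Finset.card_filter]
    simp only [List.length_cons]
    rw [Fin.sum_univ_succ]
    simp only [List.get_eq_getElem, List.getElem_cons_zero, Fin.val_succ,
      List.getElem_cons_succ, List.count_cons, ih, Finset.card_filter]
    rw [add_comm]
    congr 1
    rcases eq_or_ne a τ with h | h
    · simp [h]
    · simp [h, Ne.symm h]

theorem produced_head? (s : S) (m : List (S → S)) : (produced s m).head? = some s := by
  cases m <;> simp [produced, List.scanl]

theorem se_append {s : S} {m n : List (S → S)} (h1 : StepwiseEffective s m)
    (h2 : StepwiseEffective (apply s m) n) : StepwiseEffective s (m ++ n) := by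
  induction m generalizing s with
  | nil => simpa [apply] using h2
  | cons τ t ih =>
    have h1' : StepwiseEffective (τ s) t := by
      simpa [StepwiseEffective, produced, List.scanl_cons, List.Chain'] using (List.isChain_cons.mp (by
        simpa [StepwiseEffective, produced, List.scanl_cons, List.Chain'] using h1)).2
    have hh : s ≠ τ s := by
      have := (List.isChain_cons.mp (by
        simpa [StepwiseEffective, produced, List.scanl_cons, List.Chain'] using h1)).1
      have hhd := produced_head? (τ s) t
      exact fun he => (this (τ s) (by rw [← he] at hhd ⊢; simpa [produced] using hhd)) he
    have h2' : StepwiseEffective (apply (τ s) t) n := by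
      simpa [apply] using h2
    have htail := ih h1' h2'
    show List.Chain' _ (produced s (τ :: (t ++ n)))
    rw [produced, List.scanl_cons, List.Chain']
    refine List.isChain_cons.mpr ⟨?_, htail⟩
    intro y hy
    have : y = τ s := by
      have := produced_head? (τ s) (t ++ n)
      rw [produced] at this
      rw [this] at hy
      exact (by simpa using hy : τ s = y).symm
    rw [this]
    exact hh


theorem vacuous_count {w : List (S → S)} (hw : Vacuous w) {τ τ' : S → S}
    (h : IsReverse τ τ') : w.count τ = w.count τ' := by
  classical
  obtain ⟨f, hinv, -, hrev⟩ := hw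
  rw [count_eq_card, count_eq_card]
  apply Finset.card_bij (fun i _ => f i)
  · intro i hi
    simp only [Finset.mem_filter, Finset.mem_univ, true_and] at hi ⊢
    have hx := hrev i
    rw [hi] at hx
    exact isReverse_unique hx h
  · intro i _ j _ hij
    exact hinv.injective hij
  · intro j hj
    simp only [Finset.mem_filter, Finset.mem_univ, true_and] at hj
    refine ⟨f j, ?_, hinv j⟩
    simp only [Finset.mem_filter, Finset.mem_univ, true_and]
    have hx := hrev j
    rw [hj] at hx
    exact isReverse_unique hx (isReverse_symm h)

end Media

open Media

/-- Lemma 5.4: in a medium, a vacuous message which is stepwise effective for a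
state `s` is ineffective for `s`. -/
theorem vacuous_stepwiseEffective_ineffective {S : Type u} {T : Set (S → S)}
    (hM : IsMedium T) (s : S) (m : List (S → S)) (hm : ∀ τ ∈ m, τ ∈ T)
    (hvac : Vacuous m) (hse : StepwiseEffective s m) :
    apply s m = s := by
  classical
  by_contra hne
  obtain ⟨-, -, -, hM1, hM2⟩ := hM
  obtain ⟨n, hnT, ⟨hnse, hncons, -⟩, hnapp⟩ := hM1 (apply s m) s hne
  have hclosed : Closed s (m ++ n) := by
    refine ⟨se_append hse hnse, ?_⟩
    rw [apply, List.foldl_append]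
    exact hnapp
  have hwT : ∀ τ ∈ m ++ n, τ ∈ T := by
    intro τ hτ
    rcases List.mem_append.mp hτ with h | h
    exacts [hm τ h, hnT τ h]
  have hwvac := hM2 s (m ++ n) hwT hclosed
  have hn0 : n ≠ [] := by
    rintro rfl
    exact hne (by simpa [apply] using hnapp)
  obtain ⟨τ, hτn⟩ := List.exists_mem_of_ne_nil n hn0
  have hτw : τ ∈ m ++ n := List.mem_append.mpr (Or.inr hτn)
  obtain ⟨i, hi⟩ := List.mem_iff_get.mp hτw
  obtain ⟨f, hinv, hfix, hrev⟩ := hwvac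
  set τ' := (m ++ n).get (f i) with hτ'
  have hrr : IsReverse τ τ' := by
    rw [← hi]
    exact hrev i
  have h1 : (m ++ n).count τ = (m ++ n).count τ' :=
    vacuous_count ⟨f, hinv, hfix, hrev⟩ hrr
  have h2 : m.count τ = m.count τ' := vacuous_count hvac hrr
  have h4 : n.count τ' = 0 :=
    List.count_eq_zero.mpr fun hc => hncons τ hτn τ' hc hrr
  have h5 : 0 < n.count τ := List.count_pos_iff.mpr hτn
  rw [List.count_append, List.count_append, h2, h4] at h1
  omega
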